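/- For all integers d ≥ 1 and v ≥ 1, one has k(2d, 2v) + 3·k(d, v) < 2·(2d+1)^{2v}. (This is the arithmetic content of the bound |Irr(G(2d,2,w))| < (2d+1)^w for even w = 2v, where the irreducible character count equals (k(2d,2v) − k(d,v))/2 + 2·k(d,v).) -/

import Mathlib

/-- `kTuples s t` is the number of `s`-tuples `(λ₁, …, λ_s)` of integer partitions
(of arbitrary nonnegative integers) with `|λ₁| + ⋯ + |λ_s| = t`. -/
noncomputable def kTuples (s t : ℕ) : ℕ :=
  Nat.card { f : Fin s → Σ n : ℕ, Nat.Partition n // ∑ i, (f i).1 = t }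


namespace KTuplesAux

variable {s : ℕ}

def decode : List (Option (Fin s)) → ℕ → Fin s → Multiset ℕ
  | [], _, _ => 0
  | none :: w, c, j => decode w (c + 1) j
  | some i :: w, c, j => (if j = i then {c + 1} else 0) + decode w 0 j

def encPart (i : Fin s) (p : ℕ) : List (Option (Fin s)) :=
  List.replicate (p - 1) none ++ [some i]

def encL (i : Fin s) : List ℕ → List (Option (Fin s))
  | [] => []
  | p :: l => encPart i p ++ encL i l

noncomputable def encF (f : Fin s → Σ n : ℕ, Nat.Partition n) (is : List (Fin s)) :
    List (Option (Fin s)) :=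
  (is.map fun i => encL i (f i).2.parts.toList).flatten

lemma encF_nil (f : Fin s → Σ n : ℕ, Nat.Partition n) : encF f [] = [] := rfl

lemma encF_cons (f : Fin s → Σ n : ℕ, Nat.Partition n) (i : Fin s) (is : List (Fin s)) :
    encF f (i :: is) = encL i (f i).2.parts.toList ++ encF f is := by
  simp [encF]

noncomputable def encode (f : Fin s → Σ n : ℕ, Nat.Partition n) : List (Option (Fin s)) :=
  encF f (List.finRange s)

lemma decode_replicate (k : ℕ) (w : List (Option (Fin s))) (c : ℕ) (j : Fin s) :
    decode (List.replicate k none ++ w) c j = decode w (c + k) j := by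
  induction k generalizing c with
  | zero => simp [decode]
  | succ k ih =>
    rw [List.replicate_succ, List.cons_append]
    show decode (List.replicate k none ++ w) (c + 1) j = _
    rw [ih]
    ring_nf

lemma decode_encPart (i : Fin s) (p : ℕ) (hp : 0 < p) (w : List (Option (Fin s))) (j : Fin s) :
    decode (encPart i p ++ w) 0 j = (if j = i then {p} else 0) + decode w 0 j := by
  have h : 0 + (p - 1) + 1 = p := by omega
  rw [encPart, List.append_assoc, decode_replicate]
  show (if j = i then ({0 + (p - 1) + 1} : Multiset ℕ) else 0) + decode w 0 j = _
  rw [h]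

lemma decode_encL (i : Fin s) (l : List ℕ) (hl : ∀ p ∈ l, 0 < p) (w : List (Option (Fin s)))
    (j : Fin s) :
    decode (encL i l ++ w) 0 j = (if j = i then (↑l : Multiset ℕ) else 0) + decode w 0 j := by
  induction l with
  | nil => simp [encL]
  | cons p l ih =>
    rw [encL, List.append_assoc, decode_encPart i p (hl p (by simp)) _ j,
      ih (fun q hq => hl q (by simp [hq]))]
    rw [← add_assoc]
    congr 1
    by_cases h : j = i <;> simp [h, Multiset.cons_coe]

lemma decode_encF (f : Fin s → Σ n : ℕ, Nat.Partition n) (is : List (Fin s)) (his : is.Nodup)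
    (w : List (Option (Fin s))) (j : Fin s) :
    decode (encF f is ++ w) 0 j =
      (if j ∈ is then (f j).2.parts else 0) + decode w 0 j := by
  induction is with
  | nil => simp [encF_nil]
  | cons i is ih =>
    obtain ⟨hni, hnd⟩ := List.nodup_cons.mp his
    rw [encF_cons, List.append_assoc,
      decode_encL i _ (fun p hp => (f i).2.parts_pos (by simpa using hp)) _ j, ih hnd,
      ← add_assoc]
    congr 1
    by_cases h : j = i
    · subst h
      simp [hni, Multiset.coe_toList]
    · simp [h]

lemma decode_encode (f : Fin s → Σ n : ℕ, Nat.Partition n) (j : Fin s) :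
    decode (encode f) 0 j = (f j).2.parts := by
  have := decode_encF f (List.finRange s) (List.nodup_finRange s) [] j
  simpa [encode, decode, List.mem_finRange] using this

lemma encode_injective : Function.Injective (encode (s := s)) := by
  intro f g h
  funext j
  have hp : (f j).2.parts = (g j).2.parts := by
    rw [← decode_encode f j, ← decode_encode g j, h]
  revert hp
  rcases f j with ⟨n, P⟩
  rcases g j with ⟨m, Q⟩
  intro hp
  dsimp only at hp
  have hnm : n = m := by rw [← P.parts_sum, ← Q.parts_sum, hp]
  subst hnm
  exact congrArg (Sigma.mk n) (Nat.Partition.ext hp)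

lemma length_encPart (i : Fin s) (p : ℕ) (hp : 0 < p) : (encPart i p).length = p := by
  simp [encPart]; omega

lemma length_encL (i : Fin s) (l : List ℕ) (hl : ∀ p ∈ l, 0 < p) :
    (encL i l).length = l.sum := by
  induction l with
  | nil => simp [encL]
  | cons p l ih =>
    rw [encL, List.length_append, length_encPart i p (hl p (by simp)),
      ih (fun q hq => hl q (by simp [hq])), List.sum_cons]

lemma length_encF (f : Fin s → Σ n : ℕ, Nat.Partition n) (is : List (Fin s)) :
    (encF f is).length = (is.map (fun i => (f i).1)).sum := by
  induction is with
  | nil => simp [encF_nil]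
  | cons i is ih =>
    rw [encF_cons, List.length_append, ih,
      length_encL i _ (fun p hp => (f i).2.parts_pos (by simpa using hp))]
    have : ((f i).2.parts.toList).sum = (f i).1 := by
      rw [Multiset.sum_toList, (f i).2.parts_sum]
    simp [this]

lemma length_encode (f : Fin s → Σ n : ℕ, Nat.Partition n) :
    (encode f).length = ∑ i, (f i).1 := by
  rw [encode, length_encF, ← Fin.sum_univ_def]

end KTuplesAux

open KTuplesAux in
lemma kTuples_le (s t : ℕ) : kTuples s t ≤ (s + 1) ^ t := by
  classical
  have key : ∀ x : { f : Fin s → Σ n : ℕ, Nat.Partition n // ∑ i, (f i).1 = t },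
      (encode x.1).length = t := fun x => by rw [length_encode, x.2]
  set E : { f : Fin s → Σ n : ℕ, Nat.Partition n // ∑ i, (f i).1 = t } →
      (Fin t → Option (Fin s)) :=
    fun x j => (encode x.1).get ⟨j, by rw [key x]; exact j.2⟩ with hE
  have hinj : Function.Injective E := by
    intro x y hxy
    have hlen : (encode x.1).length = (encode y.1).length := by rw [key x, key y]
    have henc : encode x.1 = encode y.1 := by
      apply List.ext_get hlen
      intro n h1 h2
      have := congrFun hxy ⟨n, by rw [← key x]; exact h1⟩
      simpa [hE] using this
    exact Subtype.ext (encode_injective henc)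
  calc kTuples s t ≤ Nat.card (Fin t → Option (Fin s)) :=
        Nat.card_le_card_of_injective E hinj
    _ = (s + 1) ^ t := by
        simp [Nat.card_eq_fintype_card]

theorem kTuples_two_mul_add_three_mul_lt (d v : ℕ) (hd : 1 ≤ d) (hv : 1 ≤ v) :
    kTuples (2 * d) (2 * v) + 3 * kTuples d v < 2 * (2 * d + 1) ^ (2 * v) := by
  have h1 : kTuples (2 * d) (2 * v) ≤ (2 * d + 1) ^ (2 * v) := kTuples_le _ _
  have h2 : kTuples d v ≤ (d + 1) ^ v := kTuples_le d v
  have h3 : 3 * (d + 1) ^ v < (2 * d + 1) ^ (2 * v) := by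
    have e1 : (2 * d + 1) ^ (2 * v) = ((2 * d + 1) ^ 2) ^ v := by
      rw [← pow_mul]
    have e2 : (4 * (d + 1)) ^ v ≤ ((2 * d + 1) ^ 2) ^ v := by
      apply Nat.pow_le_pow_left
      nlinarith
    have e3 : 4 * (d + 1) ^ v ≤ (4 * (d + 1)) ^ v := by
      rw [mul_pow]
      exact Nat.mul_le_mul (Nat.le_self_pow (by omega) 4) le_rfl
    have e4 : 3 * (d + 1) ^ v < 4 * (d + 1) ^ v := by
      have : 0 < (d + 1) ^ v := pow_pos (by omega) v
      omega
    omega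
  omega
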